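/- Assume N is even, α_{n+1} = [[I_{N/2}, 0], [0, −I_{N/2}]] in 2×2 block form, and for each x ∈ ℝ^n the matrix Γ(x) has the block form [[0, β(x)*], [β(x), 0]] where β(x) is an (N/2)×(N/2) matrix with β(x)*β(x) = β(x)β(x)* = |x|² I_{N/2}. Let x ∈ ℝ^n with |x| = 1, m ≥ 0, and let k > 0 satisfy k·cos(2k) + m·sin(2k) = 0; set E := √(k² + m²). Then for every C ∈ ℂ^{N/2}, the function f(t) := k cos(k(t+1))·(C, −i β(x) C) + sin(k(t+1))·((E+m) C, i (E−m) β(x) C) satisfies −i Γ(x) f'(t) + m α_{n+1} f(t) = E f(t) for all t ∈ [−1, 1], together with the boundary conditions −i α_{n+1} Γ(x) f(1) = f(1) and −i α_{n+1} Γ(x) f(−1) = −f(−1). -/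

import Mathlib

open Matrix

private lemma offdiag_mulVec' {M : ℕ} (B : Matrix (Fin M) (Fin M) ℂ)
    (C w : Fin M → ℂ) (hw : Bᴴ *ᵥ w = C) (hBC : B *ᵥ C = w) (a b : ℂ) :
    (Matrix.fromBlocks 0 Bᴴ B 0) *ᵥ
      (Sum.elim (fun i => a * C i) (fun i => b * w i)) =
      Sum.elim (fun i => b * C i) (fun i => a * w i) := by
  rw [Matrix.fromBlocks_mulVec]
  have h1 : (Sum.elim (fun i => a * C i) (fun i => b * w i) ∘ Sum.inl) = a • C := rfl
  have h2 : (Sum.elim (fun i => a * C i) (fun i => b * w i) ∘ Sum.inr) = b • w := rfl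
  rw [h1, h2]
  simp only [Matrix.mulVec_smul, hw, hBC, Matrix.zero_mulVec]
  funext i
  cases i <;> simp

private lemma offdiag_neg_mulVec' {M : ℕ} (B : Matrix (Fin M) (Fin M) ℂ)
    (C w : Fin M → ℂ) (hw : Bᴴ *ᵥ w = C) (hBC : B *ᵥ C = w) (a b : ℂ) :
    (Matrix.fromBlocks 0 Bᴴ (-B) 0) *ᵥ
      (Sum.elim (fun i => a * C i) (fun i => b * w i)) =
      Sum.elim (fun i => b * C i) (fun i => (-a) * w i) := by
  rw [Matrix.fromBlocks_mulVec]
  have h1 : (Sum.elim (fun i => a * C i) (fun i => b * w i) ∘ Sum.inl) = a • C := rfl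
  have h2 : (Sum.elim (fun i => a * C i) (fun i => b * w i) ∘ Sum.inr) = b • w := rfl
  rw [h1, h2]
  simp only [Matrix.neg_mulVec, Matrix.mulVec_smul, hw, hBC, Matrix.zero_mulVec]
  funext i
  cases i <;> simp

private lemma diag_mulVec' {M : ℕ} (C w : Fin M → ℂ) (a b : ℂ) :
    (Matrix.fromBlocks (1 : Matrix (Fin M) (Fin M) ℂ) 0 0 (-1)) *ᵥ
      (Sum.elim (fun i => a * C i) (fun i => b * w i)) =
      Sum.elim (fun i => a * C i) (fun i => (-b) * w i) := by
  rw [Matrix.fromBlocks_mulVec]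
  have h1 : (Sum.elim (fun i => a * C i) (fun i => b * w i) ∘ Sum.inl) = a • C := rfl
  have h2 : (Sum.elim (fun i => a * C i) (fun i => b * w i) ∘ Sum.inr) = b • w := rfl
  rw [h1, h2]
  simp only [Matrix.one_mulVec, Matrix.zero_mulVec, Matrix.neg_mulVec]
  funext i
  cases i <;> simp

private lemma bmat' {M : ℕ} (B : Matrix (Fin M) (Fin M) ℂ) :
    Matrix.fromBlocks (1 : Matrix (Fin M) (Fin M) ℂ) 0 0 (-1) * Matrix.fromBlocks 0 Bᴴ B 0
      = Matrix.fromBlocks 0 Bᴴ (-B) 0 := by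
  rw [Matrix.fromBlocks_multiply]
  simp

/-- Explicit eigenfunctions of the transverse Dirac operator: in the block representation
with `α_{n+1} = diag(I, −I)` and `Γ(x) = [[0, β(x)*],[β(x), 0]]`, for `|x| = 1`, `m ≥ 0`,
`k > 0` with `k cos(2k) + m sin(2k) = 0` and `E = √(k² + m²)`, the function
`f(t) = k cos(k(t+1))·(C, −iβ(x)C) + sin(k(t+1))·((E+m)C, i(E−m)β(x)C)` satisfies
`−i Γ(x) f'(t) + m α_{n+1} f(t) = E f(t)` on `[−1,1]` with the infinite mass boundary
conditions. -/
theorem transverse_dirac_eigenfunction (n M : ℕ)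
    (α : Fin (n + 1) → Matrix (Fin M ⊕ Fin M) (Fin M ⊕ Fin M) ℂ)
    (hHerm : ∀ j, (α j).IsHermitian)
    (hAnti : ∀ j k, α j * α k + α k * α j = (if j = k then (2 : ℂ) else 0) • 1)
    (hlast : α (Fin.last n) = Matrix.fromBlocks 1 0 0 (-1))
    (β : (Fin n → ℝ) → Matrix (Fin M) (Fin M) ℂ)
    (hblock : ∀ x : Fin n → ℝ,
      (∑ j : Fin n, (x j : ℂ) • α j.castSucc) = Matrix.fromBlocks 0 (β x)ᴴ (β x) 0)
    (hβ : ∀ x : Fin n → ℝ,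
      (β x)ᴴ * β x = ((∑ j, x j ^ 2 : ℝ) : ℂ) • 1 ∧
      β x * (β x)ᴴ = ((∑ j, x j ^ 2 : ℝ) : ℂ) • 1)
    (x : Fin n → ℝ) (hx : ∑ j, x j ^ 2 = 1)
    (m : ℝ) (hm : 0 ≤ m)
    (k : ℝ) (hk : 0 < k)
    (heq : k * Real.cos (2 * k) + m * Real.sin (2 * k) = 0)
    (E : ℝ) (hE : E = Real.sqrt (k ^ 2 + m ^ 2))
    (C : Fin M → ℂ)
    (f : ℝ → (Fin M ⊕ Fin M) → ℂ)
    (hf : ∀ t : ℝ, f t =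
      ((k * Real.cos (k * (t + 1)) : ℝ) : ℂ) •
        Sum.elim C (fun i => (-Complex.I) * ((β x).mulVec C) i)
      + ((Real.sin (k * (t + 1)) : ℝ) : ℂ) •
        Sum.elim (fun i => ((E + m : ℝ) : ℂ) * C i)
          (fun i => Complex.I * ((E - m : ℝ) : ℂ) * ((β x).mulVec C) i)) :
    (∀ t ∈ Set.Icc (-1 : ℝ) 1,
      (-Complex.I) • (∑ j : Fin n, (x j : ℂ) • α j.castSucc).mulVec (deriv f t)
        + (m : ℂ) • (α (Fin.last n)).mulVec (f t) = (E : ℂ) • f t) ∧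
    ((-Complex.I) • (α (Fin.last n) *
        ∑ j : Fin n, (x j : ℂ) • α j.castSucc)).mulVec (f 1) = f 1 ∧
    ((-Complex.I) • (α (Fin.last n) *
        ∑ j : Fin n, (x j : ℂ) • α j.castSucc)).mulVec (f (-1)) = -f (-1) := by
  set w : Fin M → ℂ := (β x).mulVec C with hwdef
  have hx' : ((∑ j, x j ^ 2 : ℝ) : ℂ) = 1 := by rw [hx]; norm_num
  have hB1 : (β x)ᴴ * β x = 1 := by rw [(hβ x).1, hx', one_smul]
  have hw : (β x)ᴴ *ᵥ w = C := by
    rw [hwdef, Matrix.mulVec_mulVec, hB1, Matrix.one_mulVec]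
  have hBC : (β x) *ᵥ C = w := hwdef.symm
  have hE2 : E ^ 2 = k ^ 2 + m ^ 2 := by
    rw [hE]; exact Real.sq_sqrt (by positivity)
  have hE2c : (E : ℂ) ^ 2 = (k : ℂ) ^ 2 + (m : ℂ) ^ 2 := by exact_mod_cast hE2
  -- Sum.elim form of f
  have hfe : ∀ t : ℝ, f t = Sum.elim
      (fun i => (((k * Real.cos (k * (t + 1)) : ℝ) : ℂ)
        + ((Real.sin (k * (t + 1)) : ℝ) : ℂ) * ((E + m : ℝ) : ℂ)) * C i)
      (fun i => (((k * Real.cos (k * (t + 1)) : ℝ) : ℂ) * (-Complex.I)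
        + ((Real.sin (k * (t + 1)) : ℝ) : ℂ) * Complex.I * ((E - m : ℝ) : ℂ)) * w i) := by
    intro t
    rw [hf t]
    funext i
    cases i <;> simp <;> ring
  -- derivative
  have hder : ∀ t : ℝ, HasDerivAt f
      (((-(k ^ 2) * Real.sin (k * (t + 1)) : ℝ) : ℂ) •
        Sum.elim C (fun i => (-Complex.I) * w i)
       + ((k * Real.cos (k * (t + 1)) : ℝ) : ℂ) •
        Sum.elim (fun i => ((E + m : ℝ) : ℂ) * C i)
          (fun i => Complex.I * ((E - m : ℝ) : ℂ) * w i)) t := by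
    intro t
    have hlin : HasDerivAt (fun t : ℝ => k * (t + 1)) k t := by
      simpa using ((hasDerivAt_id t).add_const 1).const_mul k
    have hc : HasDerivAt (fun t : ℝ => k * Real.cos (k * (t + 1)))
        (-(k ^ 2) * Real.sin (k * (t + 1))) t := by
      have := hlin.cos.const_mul k
      rw [show -(k ^ 2) * Real.sin (k * (t + 1)) = k * (-Real.sin (k * (t + 1)) * k) by ring]
      exact this
    have hs : HasDerivAt (fun t : ℝ => Real.sin (k * (t + 1)))
        (k * Real.cos (k * (t + 1))) t := by
      have := hlin.sin
      convert this using 1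
      ring
    have hfun : f = fun t => ((k * Real.cos (k * (t + 1)) : ℝ) : ℂ) •
        Sum.elim C (fun i => (-Complex.I) * w i)
      + ((Real.sin (k * (t + 1)) : ℝ) : ℂ) •
        Sum.elim (fun i => ((E + m : ℝ) : ℂ) * C i)
          (fun i => Complex.I * ((E - m : ℝ) : ℂ) * w i) := funext hf
    rw [hfun]
    exact (hc.ofReal_comp.smul_const _).add (hs.ofReal_comp.smul_const _)
  have hde : ∀ t : ℝ, deriv f t = Sum.elim
      (fun i => (((-(k ^ 2) * Real.sin (k * (t + 1)) : ℝ) : ℂ)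
        + ((k * Real.cos (k * (t + 1)) : ℝ) : ℂ) * ((E + m : ℝ) : ℂ)) * C i)
      (fun i => (((-(k ^ 2) * Real.sin (k * (t + 1)) : ℝ) : ℂ) * (-Complex.I)
        + ((k * Real.cos (k * (t + 1)) : ℝ) : ℂ) * Complex.I * ((E - m : ℝ) : ℂ)) * w i) := by
    intro t
    rw [(hder t).deriv]
    funext i
    cases i <;> simp <;> ring
  refine ⟨?_, ?_, ?_⟩
  · -- the ODE
    intro t _
    rw [hblock x, hlast, hde t, hfe t,
      offdiag_mulVec' (β x) C w hw hBC, diag_mulVec']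
    funext i
    cases i with
    | inl i =>
      simp only [Sum.elim_inl, Pi.add_apply, Pi.smul_apply, smul_eq_mul]
      push_cast
      linear_combination (C i) *
        ((-(((k:ℂ))^2 * Complex.sin ((k:ℂ) * ((t:ℂ) + 1))
            + (k:ℂ) * Complex.cos ((k:ℂ) * ((t:ℂ) + 1)) * (E:ℂ)
            - (k:ℂ) * Complex.cos ((k:ℂ) * ((t:ℂ) + 1)) * (m:ℂ))) * Complex.I_sq
          - Complex.sin ((k:ℂ) * ((t:ℂ) + 1)) * hE2c)
    | inr i =>
      simp only [Sum.elim_inr, Pi.add_apply, Pi.smul_apply, smul_eq_mul]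
      push_cast
      linear_combination (-Complex.I * Complex.sin ((k:ℂ) * ((t:ℂ) + 1)) * w i) * hE2c
  · -- boundary at t = 1
    have heqr : k * Real.cos (k * (1 + 1)) + m * Real.sin (k * (1 + 1)) = 0 := by
      rw [show k * (1 + 1) = 2 * k by ring]; exact heq
    have heqc : (k : ℂ) * Complex.cos ((k:ℂ) * (1 + 1)) + (m : ℂ) * Complex.sin ((k:ℂ) * (1 + 1)) = 0 := by
      have h2 := congrArg (fun r : ℝ => (r : ℂ)) heqr
      push_cast at h2
      convert h2 using 3 <;> norm_num
    rw [hlast, hblock x, bmat', Matrix.smul_mulVec, hfe 1,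
      offdiag_neg_mulVec' (β x) C w hw hBC]
    funext i
    cases i with
    | inl i =>
      simp only [Sum.elim_inl, Pi.smul_apply, smul_eq_mul]
      push_cast
      linear_combination (C i) *
        (((k:ℂ) * Complex.cos ((k:ℂ) * (1 + 1)) - Complex.sin ((k:ℂ) * (1 + 1)) * (E:ℂ)
          + Complex.sin ((k:ℂ) * (1 + 1)) * (m:ℂ)) * Complex.I_sq - 2 * heqc)
    | inr i =>
      simp only [Sum.elim_inr, Pi.smul_apply, smul_eq_mul]
      push_cast
      linear_combination (2 * Complex.I * w i) * heqc
  · -- boundary at t = -1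
    rw [hlast, hblock x, bmat', Matrix.smul_mulVec, hfe (-1),
      offdiag_neg_mulVec' (β x) C w hw hBC,
      show k * (-1 + 1) = 0 by ring]
    funext i
    cases i with
    | inl i =>
      simp only [Sum.elim_inl, Pi.smul_apply, Pi.neg_apply, smul_eq_mul,
        Real.cos_zero, Real.sin_zero]
      push_cast
      linear_combination ((k:ℂ) * C i) * Complex.I_sq
    | inr i =>
      simp only [Sum.elim_inr, Pi.smul_apply, Pi.neg_apply, smul_eq_mul,
        Real.cos_zero, Real.sin_zero]
      push_cast
      ring
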